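/- Let (M, F_M, F_{M*}, Ψ, c) be a self-dual F-crystal of rank n over k, and let a₁ ≤ a₂ ≤ … ≤ a_n be its Hodge slopes, i.e. the unique integers 0 ≤ a₁ ≤ … ≤ a_n for which there exist W(k)-bases v₁, …, v_n and w₁, …, w_n of M with F_M(v_i) = p^{a_i}·w_i for all i. Then a_i + a_{n-i+1} = ν(c) for every i = 1, …, n, where ν is the p-adic valuation on W(k). -/

import Mathlib

lemma det_dvd_of_block {R : Type*} [CommRing R] {n : ℕ} (q : R)
    (A : Matrix (Fin n) (Fin n) R) (S T : Finset (Fin n))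
    (hcard : n < S.card + T.card)
    (h : ∀ j ∈ S, ∀ l ∈ T, q ∣ A j l) : q ∣ A.det := by
  classical
  rw [Matrix.det_apply]
  refine Finset.dvd_sum fun σ _ => ?_
  obtain ⟨l, hlT, hlS⟩ : ∃ l ∈ T, σ l ∈ S := by
    by_contra hcon
    push_neg at hcon
    have hdisj : Disjoint S (T.image σ) := by
      rw [Finset.disjoint_right]
      rintro x hx hxS
      obtain ⟨l, hl, rfl⟩ := Finset.mem_image.mp hx
      exact hcon l hl hxS
    have h1 : (S ∪ T.image σ).card ≤ n := by
      simpa using Finset.card_le_univ (S ∪ T.image σ)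
    rw [Finset.card_union_of_disjoint hdisj,
      Finset.card_image_of_injective _ σ.injective] at h1
    omega
  have hd : q ∣ ∏ i, A (σ i) i :=
    (h _ hlS _ hlT).trans (Finset.dvd_prod_of_mem _ (Finset.mem_univ l))
  simpa [Units.smul_def, zsmul_eq_mul] using hd.mul_left _


/-- The "transpose" `F_M^* : M^* → M^*` of a `σ`-semilinear map `F : M → M`,
given by `F_M^*(φ) = σ⁻¹ ∘ φ ∘ F`. -/
noncomputable def transposeF {R : Type*} [CommRing R] (e : R ≃+* R)
    {M : Type*} [AddCommGroup M] [Module R M]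
    (F : M →+ M) (hF : ∀ (a : R) (m : M), F (a • m) = e a • F m) :
    Module.Dual R M → Module.Dual R M := fun φ =>
  { toFun := fun x => e.symm (φ (F x))
    map_add' := fun x y => by simp [map_add]
    map_smul' := fun a x => by
      simp only [hF, map_smul, smul_eq_mul, map_mul, RingEquiv.symm_apply_apply,
        RingHom.id_apply] }

/-- Let `(M, F_M, F_{M*}, Ψ, c)` be a self-dual `F`-crystal of rank `n`
over a perfect field `k`, with Hodge slopes `a₁ ≤ ⋯ ≤ a_n` (i.e. there are `W(k)`-bases
`v₁, …, v_n` and `w₁, …, w_n` of `M` with `F_M(vᵢ) = p^{aᵢ}·wᵢ`).  Then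
`aᵢ + a_{n-i+1} = ν(c)` for every `i`, where `ν` is the `p`-adic valuation on `W(k)`
(recorded as the exponent `m` in the factorization `c = p^m · u` with `u` a unit, which
exists and is unique since `W(k)` is a discrete valuation ring with uniformizer `p`). -/
theorem selfdual_Fcrystal_hodge_slopes_symmetry
    (p : ℕ) [Fact p.Prime] (k : Type*) [Field k] [CharP k p] [PerfectRing k p]
    (n : ℕ)
    (M : Type*) [AddCommGroup M] [Module (WittVector p k) M]
    [Module.Free (WittVector p k) M] [Module.Finite (WittVector p k) M]
    -- the self-dual `F`-crystal structure:
    (c : WittVector p k) (hc : c ≠ 0)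
    (FM : M →+ M)
    (hFMsl : ∀ (a : WittVector p k) (m : M),
      FM (a • m) = WittVector.frobeniusEquiv p k a • FM m)
    (hFMinj : Function.Injective FM)
    (FMs : Module.Dual (WittVector p k) M →+ Module.Dual (WittVector p k) M)
    (hFMssl : ∀ (a : WittVector p k) (φ : Module.Dual (WittVector p k) M),
      FMs (a • φ) = WittVector.frobeniusEquiv p k a • FMs φ)
    (hFMsinj : Function.Injective FMs)
    (hrel1 : ∀ φ, FMs (transposeF (WittVector.frobeniusEquiv p k) FM hFMsl φ) = c • φ)
    (hrel2 : ∀ φ, transposeF (WittVector.frobeniusEquiv p k) FM hFMsl (FMs φ)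
      = (WittVector.frobeniusEquiv p k).symm c • φ)
    (Ψ : M ≃ₗ[WittVector p k] Module.Dual (WittVector p k) M)
    (hΨ : ∀ m, Ψ (FM m) = FMs (Ψ m))
    -- the Hodge slopes `a₁ ≤ ⋯ ≤ a_n`:
    (a : Fin n → ℕ) (ha : Monotone a)
    (v w : Module.Basis (Fin n) (WittVector p k) M)
    (hvw : ∀ i, FM (v i) = ((p : WittVector p k) ^ (a i)) • w i)
    -- `ν(c) = m`, i.e. `c = p^m · u` with `u` a unit:
    (m : ℕ) (u : (WittVector p k)ˣ) (hcu : c = (p : WittVector p k) ^ m * u) :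
    -- conclusion: `aᵢ + a_{n-i+1} = ν(c)` for all `i`:
    ∀ i : Fin n, a i + a i.rev = m := by
    classical
  have hirr : Irreducible (p : WittVector p k) := WittVector.irreducible p
  have hp0 : (p : WittVector p k) ≠ 0 := hirr.ne_zero
  have hpu : ¬ IsUnit (p : WittVector p k) := hirr.not_isUnit
  -- the key pairing identity
  have key : ∀ x y : M, Ψ (FM x) (FM y)
      = c * WittVector.frobeniusEquiv p k (Ψ x y) := by
    intro x y
    have h2 : (WittVector.frobeniusEquiv p k).symm ((FMs (Ψ x)) (FM y))
        = (WittVector.frobeniusEquiv p k).symm c * (Ψ x) y := by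
      have h := congrFun (congrArg DFunLike.coe (hrel2 (Ψ x))) y
      rw [LinearMap.smul_apply, smul_eq_mul] at h
      exact h
    calc Ψ (FM x) (FM y) = (FMs (Ψ x)) (FM y) := by rw [hΨ]
      _ = WittVector.frobeniusEquiv p k
            ((WittVector.frobeniusEquiv p k).symm c * (Ψ x) y) := by
          rw [← h2, RingEquiv.apply_symm_apply]
      _ = c * WittVector.frobeniusEquiv p k ((Ψ x) y) := by
          rw [map_mul, RingEquiv.apply_symm_apply]
  set G : Matrix (Fin n) (Fin n) (WittVector p k) :=
    Matrix.of (fun i j => Ψ (v i) (v j)) with hG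
  set H : Matrix (Fin n) (Fin n) (WittVector p k) :=
    Matrix.of (fun i j => Ψ (w i) (w j)) with hH
  have hGH : ∀ j l, (p : WittVector p k) ^ (a j + a l) * H j l
      = (p : WittVector p k) ^ m * u * WittVector.frobeniusEquiv p k (G j l) := by
    intro j l
    have h := key (v j) (v l)
    rw [hvw j, hvw l] at h
    simp only [map_smul, LinearMap.smul_apply, LinearMap.map_smul, smul_eq_mul] at h
    rw [hcu] at h
    simp only [hG, hH, Matrix.of_apply]
    rw [pow_add]
    linear_combination h
  -- Gram matrices of bases are invertible
  have hdet : ∀ b : Module.Basis (Fin n) (WittVector p k) M,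
      IsUnit (Matrix.det (Matrix.of (fun i j => Ψ (b i) (b j)))) := by
    intro b
    have h1 : (LinearMap.toMatrix b b.dualBasis Ψ.toLinearMap) *
        (LinearMap.toMatrix b.dualBasis b Ψ.symm.toLinearMap) = 1 := by
      rw [← LinearMap.toMatrix_comp b.dualBasis b b.dualBasis]
      have h0 : Ψ.toLinearMap.comp Ψ.symm.toLinearMap = LinearMap.id := by
        ext φ x; simp
      rw [h0, LinearMap.toMatrix_id]
    have h2 : IsUnit (LinearMap.toMatrix b b.dualBasis Ψ.toLinearMap).det :=
      IsUnit.of_mul_eq_one _ (by rw [← Matrix.det_mul, h1, Matrix.det_one])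
    have h3 : Matrix.of (fun i j => Ψ (b i) (b j)) =
        Matrix.transpose (LinearMap.toMatrix b b.dualBasis Ψ.toLinearMap) := by
      ext i j
      rw [Matrix.transpose_apply, LinearMap.toMatrix_apply, Module.Basis.dualBasis_repr]
      rfl
    rw [h3, Matrix.det_transpose]
    exact h2
  have hGdet : IsUnit G.det := hdet v
  have hHdet : IsUnit H.det := hdet w
  intro i
  rcases lt_trichotomy (a i + a i.rev) m with hlt | heq | hgt
  · exfalso
    have hdvd : (p : WittVector p k) ∣ H.det := by
      refine det_dvd_of_block _ _ (Finset.Iic i) (Finset.Iic i.rev) ?_ ?_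
      · rw [Fin.card_Iic, Fin.card_Iic, Fin.val_rev]
        have := i.isLt; omega
      · intro j hj l hl
        rw [Finset.mem_Iic] at hj hl
        have hs : a j + a l < m := lt_of_le_of_lt (add_le_add (ha hj) (ha hl)) hlt
        have h1 := hGH j l
        have h2 : (p : WittVector p k) ^ (a j + a l) *
            ((p : WittVector p k) ^ (m - (a j + a l)) *
              (u * WittVector.frobeniusEquiv p k (G j l)))
            = (p : WittVector p k) ^ m * u * WittVector.frobeniusEquiv p k (G j l) := by
          rw [← mul_assoc, ← pow_add, Nat.add_sub_cancel' hs.le]; ring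
        have h3 := mul_left_cancel₀ (pow_ne_zero _ hp0) (h1.trans h2.symm)
        rw [h3]
        exact Dvd.dvd.mul_right (dvd_pow_self _ (by omega)) _
    exact hpu (isUnit_of_dvd_unit hdvd hHdet)
  · exact heq
  · exfalso
    have hmapdet : IsUnit (G.map (WittVector.frobeniusEquiv p k)).det := by
      have hmm : G.map ⇑(WittVector.frobeniusEquiv p k)
          = (WittVector.frobeniusEquiv p k : WittVector p k →+* WittVector p k).mapMatrix G :=
        rfl
      rw [hmm, ← RingHom.map_det]
      exact hGdet.map _
    have hdvd : (p : WittVector p k) ∣ (G.map (WittVector.frobeniusEquiv p k)).det := by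
      refine det_dvd_of_block _ _ (Finset.Ici i) (Finset.Ici i.rev) ?_ ?_
      · rw [Fin.card_Ici, Fin.card_Ici, Fin.val_rev]
        have := i.isLt; omega
      · intro j hj l hl
        rw [Finset.mem_Ici] at hj hl
        have hs : m < a j + a l := lt_of_lt_of_le hgt (add_le_add (ha hj) (ha hl))
        have h1 := hGH j l
        have h2 : (p : WittVector p k) ^ (a j + a l) * H j l
            = (p : WittVector p k) ^ m *
              ((p : WittVector p k) ^ (a j + a l - m) * H j l) := by
          rw [← mul_assoc, ← pow_add, Nat.add_sub_cancel' hs.le]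
        have h4 : (p : WittVector p k) ^ m *
            ((p : WittVector p k) ^ (a j + a l - m) * H j l)
            = (p : WittVector p k) ^ m *
              ((u : WittVector p k) * WittVector.frobeniusEquiv p k (G j l)) := by
          rw [← h2, h1]; ring
        have h3 : (u : WittVector p k) * WittVector.frobeniusEquiv p k (G j l)
            = (p : WittVector p k) ^ (a j + a l - m) * H j l :=
          (mul_left_cancel₀ (pow_ne_zero _ hp0) h4).symm
        have h5 : WittVector.frobeniusEquiv p k (G j l)
            = (↑u⁻¹ : WittVector p k) *
              ((p : WittVector p k) ^ (a j + a l - m) * H j l) := by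
          rw [← h3, ← mul_assoc, Units.inv_mul, one_mul]
        rw [Matrix.map_apply, h5]
        exact ((dvd_pow_self (p : WittVector p k)
          (by omega : a j + a l - m ≠ 0)).mul_right _).mul_left _
    exact hpu (isUnit_of_dvd_unit hdvd hmapdet)
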